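/- Fix g > 1, ω > 1, γ ≥ 1, η ∈ (0,1). For μ > 1 let M(μ) be the 4×4 matrix M(μ) := V_{E′e}(μ) − (1/(η·μ+(1−η)·γ))·u(μ)·u(μ)ᵀ, where V_{E′e}(μ) = [[((g−1)μ+gω)·I, √(g(ω²−1))·Z],[√(g(ω²−1))·Z, ω·I]] and u(μ) is the column vector (√((g−1)·η·(μ²−1)), 0, 0, 0)ᵀ (conditioning on Alice's q-homodyne). Let Δ̄(μ) and D̄(μ) be defined by the identity charpoly(Ω₂·M(μ)) = X⁴ + Δ̄(μ)·X² + D̄(μ), and set ν̄₁(μ) := √((Δ̄(μ)+√(Δ̄(μ)²−4D̄(μ)))/2), ν̄₂(μ) := √((Δ̄(μ)−√(Δ̄(μ)²−4D̄(μ)))/2). Then ν̄₁(μ)/√μ → √( (g−1)·[g·η·ω + γ·(g−1)·(1−η)]/η ) and ν̄₂(μ) → √( ω·[g·η + γ·ω·(g−1)·(1−η)] / (g·η·ω + γ·(g−1)·(1−η)) ) as μ → ∞. -/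

import Mathlib

open Real Filter Matrix Polynomial

/-- The standard two-mode symplectic form `Ω₂`. -/
noncomputable def Omega2 : Matrix (Fin 4) (Fin 4) ℝ :=
  !![0, 1, 0, 0; -1, 0, 0, 0; 0, 0, 0, 1; 0, 0, -1, 0]

/-- Eve's total covariance matrix
`V_{E′e}(μ) = [[((g−1)μ+gω)I, √(g(ω²−1))Z],[√(g(ω²−1))Z, ωI]]`. -/
noncomputable def VEe (g ω μ : ℝ) : Matrix (Fin 4) (Fin 4) ℝ :=
  !![(g - 1) * μ + g * ω, 0, Real.sqrt (g * (ω ^ 2 - 1)), 0;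
     0, (g - 1) * μ + g * ω, 0, -Real.sqrt (g * (ω ^ 2 - 1));
     Real.sqrt (g * (ω ^ 2 - 1)), 0, ω, 0;
     0, -Real.sqrt (g * (ω ^ 2 - 1)), 0, ω]

/-- The DR conditioning vector `u(μ) = (√((g−1)η(μ²−1)), 0, 0, 0)ᵀ`. -/
noncomputable def uDR (g η μ : ℝ) : Fin 4 → ℝ :=
  ![Real.sqrt ((g - 1) * η * (μ ^ 2 - 1)), 0, 0, 0]

/-- Eve's conditional covariance matrix after Alice's `q`-homodyne:
`M(μ) = V_{E′e}(μ) − (1/(ημ+(1−η)γ))·u(μ)u(μ)ᵀ`. -/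
noncomputable def Mdr (g ω γ η μ : ℝ) : Matrix (Fin 4) (Fin 4) ℝ :=
  VEe g ω μ - (η * μ + (1 - η) * γ)⁻¹ • Matrix.vecMulVec (uDR g η μ) (uDR g η μ)

lemma omega2_mul_aux (A : Matrix (Fin 4) (Fin 4) ℝ) : Omega2 * A =
    !![A 1 0, A 1 1, A 1 2, A 1 3;
       -A 0 0, -A 0 1, -A 0 2, -A 0 3;
       A 3 0, A 3 1, A 3 2, A 3 3;
       -A 2 0, -A 2 1, -A 2 2, -A 2 3] := by
  ext i j
  fin_cases i <;> fin_cases j <;>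
    simp [Omega2, Matrix.mul_apply, Fin.sum_univ_four]

lemma Mdr_eq_aux (g ω γ η μ : ℝ) (hg : 1 < g) (hη0 : 0 < η) (hμ : 1 < μ) :
    Mdr g ω γ η μ =
    !![(g - 1) * μ + g * ω - (g - 1) * η * (μ ^ 2 - 1) / (η * μ + (1 - η) * γ), 0,
         Real.sqrt (g * (ω ^ 2 - 1)), 0;
       0, (g - 1) * μ + g * ω, 0, -Real.sqrt (g * (ω ^ 2 - 1));
       Real.sqrt (g * (ω ^ 2 - 1)), 0, ω, 0;
       0, -Real.sqrt (g * (ω ^ 2 - 1)), 0, ω] := by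
  have hu : Real.sqrt ((g - 1) * η * (μ ^ 2 - 1)) * Real.sqrt ((g - 1) * η * (μ ^ 2 - 1))
      = (g - 1) * η * (μ ^ 2 - 1) := by
    apply Real.mul_self_sqrt
    have h1 : (0:ℝ) ≤ g - 1 := by linarith
    have h2 : (0:ℝ) ≤ μ ^ 2 - 1 := by nlinarith
    positivity
  ext i j
  fin_cases i <;> fin_cases j <;>
    simp [Mdr, VEe, uDR, Matrix.sub_apply, Matrix.smul_apply, Matrix.vecMulVec_apply, hu,
      div_eq_inv_mul]

lemma charpoly_explicit_aux (a s c w : ℝ) :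
    Matrix.charpoly
      (!![0, a, 0, -c; -(a - s), 0, -c, 0; 0, -c, 0, w; -c, 0, -w, 0] :
        Matrix (Fin 4) (Fin 4) ℝ) =
    X ^ 4 + C (a * (a - s) + w ^ 2 - 2 * c ^ 2) * X ^ 2
      + C ((w * (a - s) - c ^ 2) * (w * a - c ^ 2)) := by
  have h : charmatrix
      (!![0, a, 0, -c; -(a - s), 0, -c, 0; 0, -c, 0, w; -c, 0, -w, 0] :
        Matrix (Fin 4) (Fin 4) ℝ) =
      !![X, -C a, 0, C c; C (a - s), X, C c, 0; 0, C c, X, -C w; C c, 0, C w, X] := by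
    ext i j
    fin_cases i <;> fin_cases j <;>
      simp [charmatrix_apply_eq, charmatrix_apply_ne, map_neg]
  rw [Matrix.charpoly, h]
  simp [Matrix.det_succ_row_zero, Fin.sum_univ_succ, Matrix.det_fin_three]
  simp only [show (Fin.succAbove (1:Fin 4) 2) = (3:Fin 4) from rfl,
    show (Fin.castSucc (2:Fin 3)) = (2:Fin 4) from rfl]
  simp
  simp only [_root_.map_mul, map_sub, map_add, map_pow, map_ofNat]
  simp only [show (Fin.succAbove (3:Fin 4) (2:Fin 3)) = (2:Fin 4) from rfl,
    Matrix.cons_val_two, Matrix.tail_cons, Matrix.head_cons]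
  ring

lemma tendsto_linear_div_linear_aux (p q r s : ℝ) (hr : 0 < r) :
    Tendsto (fun μ : ℝ => (p * μ + q) / (r * μ + s)) atTop (nhds (p / r)) := by
  have h1 : Tendsto (fun μ : ℝ => (p + q * μ⁻¹) / (r + s * μ⁻¹)) atTop (nhds (p / r)) := by
    have hnum : Tendsto (fun μ : ℝ => p + q * μ⁻¹) atTop (nhds p) := by
      simpa using tendsto_const_nhds.add (tendsto_inv_atTop_zero.const_mul q)
    have hden : Tendsto (fun μ : ℝ => r + s * μ⁻¹) atTop (nhds r) := by
      simpa using tendsto_const_nhds.add (tendsto_inv_atTop_zero.const_mul s)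
    exact hnum.div hden (ne_of_gt hr)
  refine h1.congr' ?_
  filter_upwards [eventually_gt_atTop (max 0 (-s / r))] with μ hμ
  have hμ0 : 0 < μ := lt_of_le_of_lt (le_max_left _ _) hμ
  have hden : 0 < r * μ + s := by
    have h2 := lt_of_le_of_lt (le_max_right 0 (-s / r)) hμ
    have h3 := (div_lt_iff₀ hr).mp h2
    nlinarith
  field_simp

lemma eq1_aux (x d r μ : ℝ) (hμ0 : 0 < μ) (hx : 0 < x) (hr : 0 < r)
    (hdisc : x ^ 2 - 4 * d = r * μ ^ 2) :
    Real.sqrt ((x / μ + Real.sqrt r) / 2)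
      = Real.sqrt ((x + Real.sqrt (x ^ 2 - 4 * d)) / 2) / Real.sqrt μ := by
  have hμ' : μ ≠ 0 := ne_of_gt hμ0
  have hrμ : Real.sqrt (x ^ 2 - 4 * d) = Real.sqrt r * μ := by
    rw [hdisc, Real.sqrt_mul hr.le, Real.sqrt_sq hμ0.le]
  have hx' : 0 ≤ (x + Real.sqrt r * μ) / 2 :=
    div_nonneg (add_nonneg hx.le (mul_nonneg (Real.sqrt_nonneg r) hμ0.le)) (by norm_num)
  rw [hrμ, ← Real.sqrt_div hx' μ]
  congr 1
  rw [div_div, div_eq_div_iff two_ne_zero (mul_ne_zero two_ne_zero hμ')]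
  have hc := div_mul_cancel₀ x hμ'
  linear_combination 2 * hc

lemma eq2_aux (x d r μ : ℝ) (hμ0 : 0 < μ) (hx : 0 < x) (hr : 0 < r)
    (hdisc : x ^ 2 - 4 * d = r * μ ^ 2) :
    Real.sqrt (2 * (d / μ) / (x / μ + Real.sqrt r))
      = Real.sqrt ((x - Real.sqrt (x ^ 2 - 4 * d)) / 2) := by
  have hμ' : μ ≠ 0 := ne_of_gt hμ0
  have hrμ : Real.sqrt (x ^ 2 - 4 * d) = Real.sqrt r * μ := by
    rw [hdisc, Real.sqrt_mul hr.le, Real.sqrt_sq hμ0.le]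
  have hden2 : (0:ℝ) < x / μ + Real.sqrt r :=
    add_pos_of_pos_of_nonneg (div_pos hx hμ0) (Real.sqrt_nonneg r)
  have hs : (Real.sqrt r * μ) ^ 2 = r * μ ^ 2 := by
    rw [mul_pow, Real.sq_sqrt hr.le]
  have hexp : (x - Real.sqrt r * μ) * (x + Real.sqrt r * μ) = 4 * d := by
    linear_combination hdisc - hs
  rw [hrμ]
  congr 1
  rw [div_eq_div_iff (ne_of_gt hden2) (two_ne_zero)]
  have h1 : x / μ + Real.sqrt r = (x + Real.sqrt r * μ) / μ := by
    field_simp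
  rw [h1]
  linear_combination (-(1 / μ)) * hexp

set_option maxHeartbeats 2000000 in
theorem conditional_spectrum_asymptotics_DR (g ω γ η : ℝ)
    (hg : 1 < g) (hω : 1 < ω) (hγ : 1 ≤ γ) (hη : η ∈ Set.Ioo (0 : ℝ) 1)
    (Δb Db : ℝ → ℝ)
    (hchar : ∀ μ : ℝ, 1 < μ →
      Matrix.charpoly (Omega2 * Mdr g ω γ η μ) =
        X ^ 4 + C (Δb μ) * X ^ 2 + C (Db μ)) :
    Filter.Tendsto
      (fun μ : ℝ =>
        Real.sqrt ((Δb μ + Real.sqrt ((Δb μ) ^ 2 - 4 * Db μ)) / 2) / Real.sqrt μ)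
      Filter.atTop
      (nhds (Real.sqrt ((g - 1) * (g * η * ω + γ * (g - 1) * (1 - η)) / η))) ∧
    Filter.Tendsto
      (fun μ : ℝ =>
        Real.sqrt ((Δb μ - Real.sqrt ((Δb μ) ^ 2 - 4 * Db μ)) / 2))
      Filter.atTop
      (nhds (Real.sqrt (ω * (g * η + γ * ω * (g - 1) * (1 - η)) /
        (g * η * ω + γ * (g - 1) * (1 - η))))) := by
  obtain ⟨hη0, hη1⟩ := hη
  set c2 : ℝ := g * (ω ^ 2 - 1) with hc2def
  have hc2 : Real.sqrt (g * (ω ^ 2 - 1)) ^ 2 = c2 := by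
    rw [Real.sq_sqrt]
    have h1 : (0:ℝ) < g := by linarith
    have h2 : (0:ℝ) ≤ ω ^ 2 - 1 := by nlinarith
    positivity
  set K : ℝ := g * η * ω + γ * (g - 1) * (1 - η) with hKdef
  have hK : 0 < K := by
    rw [hKdef]
    have t1 : (0:ℝ) < g * η * ω := by
      have hg0 : (0:ℝ) < g := by linarith
      have hω0 : (0:ℝ) < ω := by linarith
      positivity
    have t2 : (0:ℝ) < γ * (g - 1) * (1 - η) :=
      mul_pos (mul_pos (by linarith) (by linarith)) (by linarith)
    linarith
  set aa : ℝ → ℝ := fun μ => (g - 1) * μ + g * ω with haadef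
  set ss : ℝ → ℝ := fun μ => (g - 1) * η * (μ ^ 2 - 1) / (η * μ + (1 - η) * γ) with hssdef
  set De : ℝ → ℝ := fun μ => (ω * (aa μ - ss μ) - c2) * (ω * aa μ - c2) with hDedef
  set Δe : ℝ → ℝ := fun μ => aa μ * (aa μ - ss μ) + ω ^ 2 - 2 * c2 with hΔedef
  have hcoeff : ∀ μ : ℝ, 1 < μ → Δb μ = Δe μ ∧ Db μ = De μ := by
    intro μ hμ
    have hmat : Omega2 * Mdr g ω γ η μ =
        !![0, aa μ, 0, -Real.sqrt (g * (ω ^ 2 - 1));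
           -(aa μ - ss μ), 0, -Real.sqrt (g * (ω ^ 2 - 1)), 0;
           0, -Real.sqrt (g * (ω ^ 2 - 1)), 0, ω;
           -Real.sqrt (g * (ω ^ 2 - 1)), 0, -ω, 0] := by
      rw [Mdr_eq_aux g ω γ η μ hg hη0 hμ, omega2_mul_aux]
      ext i j
      fin_cases i <;> fin_cases j <;> simp [haadef, hssdef]
    have hpoly : (X ^ 4 + C (Δb μ) * X ^ 2 + C (Db μ) : Polynomial ℝ) =
        X ^ 4 + C (Δe μ) * X ^ 2 + C (De μ) := by
      rw [← hchar μ hμ, hmat, charpoly_explicit_aux, hc2]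
    constructor
    · have h2 := congrArg (fun p : Polynomial ℝ => p.coeff 2) hpoly
      simpa [coeff_X_pow] using h2
    · have h0 := congrArg (fun p : Polynomial ℝ => p.coeff 0) hpoly
      simpa [coeff_X_pow] using h0
  have hts : Tendsto (fun μ => aa μ - ss μ) atTop (nhds (K / η)) := by
    have h := tendsto_linear_div_linear_aux K (g * ω * (1 - η) * γ + (g - 1) * η)
      η ((1 - η) * γ) hη0
    refine h.congr' ?_
    filter_upwards [eventually_gt_atTop 0] with μ hμ0
    have hden : 0 < η * μ + (1 - η) * γ := by nlinarith
    simp only [haadef, hssdef, hKdef]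
    field_simp
    ring
  have hP : Tendsto (fun μ => Δe μ / μ) atTop (nhds ((g - 1) * (K / η))) := by
    have h : Tendsto (fun μ : ℝ => ((g - 1) + g * ω * μ⁻¹) * (aa μ - ss μ)
        + (ω ^ 2 - 2 * c2) * μ⁻¹) atTop (nhds ((g - 1) * (K / η))) := by
      have h1 : Tendsto (fun μ : ℝ => (g - 1) + g * ω * μ⁻¹) atTop (nhds (g - 1)) := by
        simpa using tendsto_const_nhds.add (tendsto_inv_atTop_zero.const_mul (g * ω))
      have h2 := (h1.mul hts).add (tendsto_inv_atTop_zero.const_mul (ω ^ 2 - 2 * c2))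
      simpa using h2
    refine h.congr' ?_
    filter_upwards [eventually_gt_atTop 0] with μ hμ0
    have hμ' : μ ≠ 0 := ne_of_gt hμ0
    simp only [hΔedef]
    field_simp
    ring
  have hQ : Tendsto (fun μ => De μ / μ) atTop
      (nhds ((ω * (K / η) - c2) * (ω * (g - 1)))) := by
    have h : Tendsto (fun μ : ℝ => (ω * (aa μ - ss μ) - c2)
        * (ω * (g - 1) + (g * ω ^ 2 - c2) * μ⁻¹)) atTop
        (nhds ((ω * (K / η) - c2) * (ω * (g - 1)))) := by
      have h1 : Tendsto (fun μ : ℝ => ω * (aa μ - ss μ) - c2) atTop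
          (nhds (ω * (K / η) - c2)) := (hts.const_mul ω).sub_const c2
      have h2 : Tendsto (fun μ : ℝ => ω * (g - 1) + (g * ω ^ 2 - c2) * μ⁻¹) atTop
          (nhds (ω * (g - 1))) := by
        simpa using tendsto_const_nhds.add (tendsto_inv_atTop_zero.const_mul (g * ω ^ 2 - c2))
      exact h1.mul h2
    refine h.congr' ?_
    filter_upwards [eventually_gt_atTop 0] with μ hμ0
    have hμ' : μ ≠ 0 := ne_of_gt hμ0
    simp only [hDedef, mul_div_assoc]
    congr 1
    simp only [haadef]
    field_simp
    ring
  set A : ℝ := (g - 1) * (K / η) with hAdef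
  set B : ℝ := (ω * (K / η) - c2) * (ω * (g - 1)) with hBdef
  have hA : 0 < A := by
    have hKη : 0 < K / η := div_pos hK hη0
    rw [hAdef]; exact mul_pos (by linarith) hKη
  have hB : 0 < B := by
    have h1 : 0 < ω * (K / η) - c2 := by
      have key : c2 * η < ω * K := by
        rw [hc2def, hKdef]
        have t2 : (0:ℝ) < γ * ω * (g - 1) * (1 - η) :=
          mul_pos (mul_pos (mul_pos (by linarith) (by linarith)) (by linarith)) (by linarith)
        have t3 : (0:ℝ) < g * η := mul_pos (by linarith) hη0
        nlinarith
      have h2 : c2 < ω * (K / η) := by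
        rw [← mul_div_assoc, lt_div_iff₀ hη0]
        linarith [key]
      linarith
    rw [hBdef]
    exact mul_pos h1 (mul_pos (by linarith) (by linarith))
  set R : ℝ → ℝ := fun μ => (Δe μ / μ) ^ 2 - 4 * (De μ / μ) * μ⁻¹ with hRdef
  have hR : Tendsto R atTop (nhds (A ^ 2)) := by
    have h1 : Tendsto (fun μ => (Δe μ / μ) ^ 2) atTop (nhds (A ^ 2)) := hP.pow 2
    have h2 : Tendsto (fun μ : ℝ => 4 * (De μ / μ) * μ⁻¹) atTop (nhds 0) := by
      have h3 := (hQ.const_mul 4).mul tendsto_inv_atTop_zero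
      rw [mul_zero] at h3
      exact h3
    have h4 := h1.sub h2
    rw [sub_zero] at h4
    exact h4
  have hgood : ∀ᶠ μ : ℝ in atTop, 1 < μ ∧ 0 < Δe μ / μ ∧ 0 < R μ := by
    have e1 := eventually_gt_atTop (1 : ℝ)
    have e2 : ∀ᶠ μ : ℝ in atTop, 0 < Δe μ / μ :=
      hP.eventually (eventually_gt_nhds hA)
    have e3 : ∀ᶠ μ : ℝ in atTop, 0 < R μ :=
      hR.eventually (eventually_gt_nhds (by positivity : (0:ℝ) < A ^ 2))
    filter_upwards [e1, e2, e3] with μ h1 h2 h3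
    exact ⟨h1, h2, h3⟩
  have hν1 : Tendsto (fun μ => Real.sqrt ((Δe μ / μ + Real.sqrt (R μ)) / 2)) atTop
      (nhds (Real.sqrt ((A + Real.sqrt (A ^ 2)) / 2))) :=
    ((hP.add hR.sqrt).div_const 2).sqrt
  have hdenA : (0:ℝ) < A + Real.sqrt (A ^ 2) := by
    have := Real.sqrt_nonneg (A ^ 2)
    linarith
  have hν2 : Tendsto (fun μ => Real.sqrt (2 * (De μ / μ) / (Δe μ / μ + Real.sqrt (R μ))))
      atTop (nhds (Real.sqrt (2 * B / (A + Real.sqrt (A ^ 2))))) :=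
    ((hQ.const_mul 2).div (hP.add hR.sqrt) (ne_of_gt hdenA)).sqrt
  have hη' : η ≠ 0 := ne_of_gt hη0
  have hKne : g * η * ω + γ * (g - 1) * (1 - η) ≠ 0 := by
    rw [← hKdef]; exact ne_of_gt hK
  constructor
  · have hval : Real.sqrt ((A + Real.sqrt (A ^ 2)) / 2)
        = Real.sqrt ((g - 1) * K / η) := by
      rw [Real.sqrt_sq hA.le]
      congr 1
      rw [hAdef]; ring
    rw [← hval]
    refine hν1.congr' ?_
    filter_upwards [hgood] with μ hμa
    obtain ⟨hμ1, hΔ, hRpos⟩ := hμa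
    have hμ0 : (0:ℝ) < μ := lt_trans one_pos hμ1
    have hμ' : μ ≠ 0 := ne_of_gt hμ0
    obtain ⟨hΔb, hDb⟩ := hcoeff μ hμ1
    have hΔpos : 0 < Δe μ := by
      have h := mul_pos hΔ hμ0
      rwa [div_mul_cancel₀ _ hμ'] at h
    have hdisc : (Δe μ) ^ 2 - 4 * De μ = R μ * μ ^ 2 := by
      simp only [hRdef]
      field_simp
    rw [hΔb, hDb]
    exact eq1_aux (Δe μ) (De μ) (R μ) μ hμ0 hΔpos hRpos hdisc
  · have hstep : ω * (g * η + γ * ω * (g - 1) * (1 - η)) / K * A = B := by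
      rw [hAdef, hBdef, hc2def]
      have hKn : K ≠ 0 := ne_of_gt hK
      field_simp
      rw [hKdef]
      ring
    have hval : 2 * B / (A + Real.sqrt (A ^ 2))
        = ω * (g * η + γ * ω * (g - 1) * (1 - η)) / K := by
      rw [Real.sqrt_sq hA.le, show A + A = 2 * A from by ring,
        mul_div_mul_left B A two_ne_zero, ← hstep,
        mul_div_cancel_right₀ _ (ne_of_gt hA)]
    rw [← hval] at *
    rw [hval] at hν2
    rw [← hval]
    refine hν2.congr' ?_
    filter_upwards [hgood] with μ hμa
    obtain ⟨hμ1, hΔ, hRpos⟩ := hμa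
    have hμ0 : (0:ℝ) < μ := lt_trans one_pos hμ1
    have hμ' : μ ≠ 0 := ne_of_gt hμ0
    obtain ⟨hΔb, hDb⟩ := hcoeff μ hμ1
    have hΔpos : 0 < Δe μ := by
      have h := mul_pos hΔ hμ0
      rwa [div_mul_cancel₀ _ hμ'] at h
    have hdisc : (Δe μ) ^ 2 - 4 * De μ = R μ * μ ^ 2 := by
      simp only [hRdef]
      field_simp
    rw [hΔb, hDb]
    exact eq2_aux (Δe μ) (De μ) (R μ) μ hμ0 hΔpos hRpos hdisc
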